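/- For all N, n, d ≥ 1 with 2n ≤ N, there exists a composition of two BaseConv layers, with parameters depending only on N, n, d (and not on the input), such that for every input y ∈ ℝ^{N×d} whose rows 0 through n−1 form a matrix x ∈ ℝ^{n×d}, whose rows n through 2n−1 form a matrix S ∈ ℝ^{n×d}, and whose remaining rows are zero, the output z ∈ ℝ^{N×d} has rows 0 through n−1 all equal to the all-ones row, rows n through 2n−1 equal to S + x, and all remaining rows zero. -/

import Mathlib

noncomputable def causalConv {N d : ℕ} (h u : Matrix (Fin N) (Fin d) ℝ) :
    Matrix (Fin N) (Fin d) ℝ :=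
  Matrix.of fun i j => ∑ k : Fin N,
    if k.val ≤ i.val then
      h k j * u ⟨i.val - k.val, lt_of_le_of_lt (Nat.sub_le _ _) i.isLt⟩ j
    else 0

noncomputable def baseConv {N d : ℕ} (W : Matrix (Fin d) (Fin d) ℝ)
    (h b1 b2 : Matrix (Fin N) (Fin d) ℝ) (u : Matrix (Fin N) (Fin d) ℝ) :
    Matrix (Fin N) (Fin d) ℝ :=
  Matrix.hadamard (u * W + b1) (causalConv h u + b2)

lemma conv_delta {N d : ℕ} (a : ℕ) (ha : a < N) (c : ℝ)
    (u : Matrix (Fin N) (Fin d) ℝ) (i : Fin N) (j : Fin d) :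
    causalConv (fun k (_ : Fin d) => if k.val = a then c else 0) u i j
      = if h : a ≤ i.val then c * u ⟨i.val - a, by omega⟩ j else 0 := by
  unfold causalConv
  simp only [Matrix.of_apply]
  rw [Finset.sum_eq_single (⟨a, ha⟩ : Fin N)]
  · split_ifs <;> simp_all
  · intro k _ hk
    have : k.val ≠ a := fun h => hk (Fin.ext h)
    split_ifs <;> simp_all
  · simp

lemma conv_add {N d : ℕ} (h h' u : Matrix (Fin N) (Fin d) ℝ) :
    causalConv (fun k j => h k j + h' k j) u
      = fun i j => causalConv h u i j + causalConv h' u i j := by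
  ext i j
  simp only [causalConv, Matrix.of_apply, ← Finset.sum_add_distrib]
  apply Finset.sum_congr rfl
  intro k _
  split_ifs <;> ring

lemma conv_add' {N d : ℕ} (h h' : Fin N → Fin d → ℝ) (u : Matrix (Fin N) (Fin d) ℝ) :
    causalConv (fun k j => h k j + h' k j) u
      = fun i j => causalConv h u i j + causalConv h' u i j := conv_add h h' u

lemma conv_delta' {N d : ℕ} (a : ℕ) (ha : a < N) (c : ℝ)
    (u : Fin N → Fin d → ℝ) (i : Fin N) (j : Fin d) :
    causalConv (fun k (_ : Fin d) => if k.val = a then c else 0) u i j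
      = if h : a ≤ i.val then c * u ⟨i.val - a, by omega⟩ j else 0 := conv_delta a ha c u i j

lemma madd_apply {N d : ℕ} (A : Matrix (Fin N) (Fin d) ℝ) (B : Fin N → Fin d → ℝ)
    (i : Fin N) (j : Fin d) :
    @HAdd.hAdd (Matrix (Fin N) (Fin d) ℝ) (Matrix (Fin N) (Fin d) ℝ) (Matrix (Fin N) (Fin d) ℝ)
      _ A B i j = A i j + B i j := rfl

lemma madd_apply' {N d : ℕ} (A : Fin N → Fin d → ℝ) (B : Matrix (Fin N) (Fin d) ℝ)
    (i : Fin N) (j : Fin d) :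
    @HAdd.hAdd (Matrix (Fin N) (Fin d) ℝ) (Matrix (Fin N) (Fin d) ℝ) (Matrix (Fin N) (Fin d) ℝ)
      _ A B i j = A i j + B i j := rfl

lemma mmul_zero' {N d : ℕ} (A : Fin N → Fin d → ℝ) :
    @HMul.hMul (Matrix (Fin N) (Fin d) ℝ) (Matrix (Fin d) (Fin d) ℝ) (Matrix (Fin N) (Fin d) ℝ)
      _ A 0 = 0 := Matrix.mul_zero _

theorem stmt_3 (N n d : ℕ) (hN : 1 ≤ N) (hn : 1 ≤ n) (hd : 1 ≤ d) (h2n : 2 * n ≤ N) :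
    ∃ (W1 W2 : Matrix (Fin d) (Fin d) ℝ)
      (h1 b11 b12 h2 b21 b22 : Matrix (Fin N) (Fin d) ℝ),
      ∀ x S : Matrix (Fin n) (Fin d) ℝ,
        baseConv W2 h2 b21 b22 (baseConv W1 h1 b11 b12
            (Matrix.of fun (i : Fin N) j =>
              if hi : i.val < n then x ⟨i.val, hi⟩ j
              else if hi2 : i.val < 2 * n then S ⟨i.val - n, by omega⟩ j
              else 0))
          = Matrix.of fun (i : Fin N) j =>
              if i.val < n then (1 : ℝ)
              else if hi2 : i.val < 2 * n then (S + x) ⟨i.val - n, by omega⟩ j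
              else 0 := by
  have hnN : n < N := by omega
  refine ⟨0, 0,
    (fun k j => ((fun k (_ : Fin d) => if k.val = 0 then (1:ℝ) else 0) k j
      + (fun k (_ : Fin d) => if k.val = n then (1:ℝ) else 0) k j)),
    (fun i _ => if n ≤ i.val ∧ i.val < 2 * n then (1:ℝ) else 0),
    0,
    (fun k _ => if k.val = 0 then (1:ℝ) else 0),
    (fun _ _ => (1:ℝ)),
    (fun i _ => if i.val < n then (1:ℝ) else 0),
    ?_⟩
  intro x S
  set u : Matrix (Fin N) (Fin d) ℝ := Matrix.of fun (i : Fin N) j =>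
      if hi : i.val < n then x ⟨i.val, hi⟩ j
      else if hi2 : i.val < 2 * n then S ⟨i.val - n, by omega⟩ j
      else 0 with hu
  have hz : baseConv 0
      (fun k j => ((fun k (_ : Fin d) => if k.val = 0 then (1:ℝ) else 0) k j
        + (fun k (_ : Fin d) => if k.val = n then (1:ℝ) else 0) k j))
      (fun i _ => if n ≤ i.val ∧ i.val < 2 * n then (1:ℝ) else 0) 0 u
      = fun (i : Fin N) j =>
          if hi : n ≤ i.val ∧ i.val < 2 * n then
            S ⟨i.val - n, by omega⟩ j + x ⟨i.val - n, by omega⟩ j else 0 := by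
    funext i j
    simp only [baseConv, conv_add', conv_delta 0 (by omega) 1 u,
      conv_delta n hnN 1 u, Matrix.hadamard_apply, Matrix.mul_zero, Matrix.add_apply,
      Matrix.zero_apply, zero_add, add_zero, one_mul, Nat.sub_zero, madd_apply, madd_apply']
    rcases Nat.lt_or_ge i.val n with hi | hi
    · have : ¬ (n ≤ i.val ∧ i.val < 2 * n) := by omega
      simp [this]
    rcases Nat.lt_or_ge i.val (2 * n) with hi2 | hi2
    · have hc : n ≤ i.val ∧ i.val < 2 * n := ⟨hi, hi2⟩
      rw [if_pos hc, dif_pos hc, dif_pos (by omega : n ≤ i.val),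
        dif_pos (Nat.zero_le i.val)]
      have h1 : u ⟨i.val, by omega⟩ j = S ⟨i.val - n, by omega⟩ j := by
        simp only [hu, Matrix.of_apply]
        rw [dif_neg (by omega), dif_pos (by omega)]
      have h2 : u ⟨i.val - n, by omega⟩ j = x ⟨i.val - n, by omega⟩ j := by
        simp only [hu, Matrix.of_apply]
        rw [dif_pos (by omega)]
      rw [h1, h2, one_mul]
    · have hc : ¬ (n ≤ i.val ∧ i.val < 2 * n) := by omega
      simp [hc]
  rw [hz]
  ext i j
  simp only [baseConv, Matrix.hadamard_apply, Matrix.mul_zero, Matrix.add_apply,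
    Matrix.zero_apply, zero_add, add_zero, Matrix.of_apply,
    conv_delta' 0 (by omega : 0 < N) 1 _ i j, one_mul, dif_pos (Nat.zero_le _), Nat.sub_zero,
    madd_apply, mmul_zero']
  rcases Nat.lt_or_ge i.val n with hi | hi
  · have : ¬ (n ≤ i.val ∧ i.val < 2 * n) := by omega
    rw [dif_neg this]
    simp [hi]
  rcases Nat.lt_or_ge i.val (2 * n) with hi2 | hi2
  · have hc : n ≤ i.val ∧ i.val < 2 * n := ⟨hi, hi2⟩
    rw [dif_pos hc]
    have h1 : ¬ i.val < n := by omega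
    simp only [h1, if_false, dif_pos hi2, Matrix.add_apply]
    ring
  · have : ¬ (n ≤ i.val ∧ i.val < 2 * n) := by omega
    rw [dif_neg this]
    have h1 : ¬ i.val < n := by omega
    have h2 : ¬ i.val < 2 * n := by omega
    simp [h1, h2]
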